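/- arXiv:1305.0955 — 2 statements merged into one kernel-verified Lean document; each statement's English description precedes it below -/
import Mathlib

section
/- Let M : [0,∞) → [0,∞) be continuous with M(t) ≥ m₀ > 0 for all t ≥ 0, and suppose there exists ϑ ≥ m₀ such that M(t₁)/t₁ − M(t₂)/t₂ ≤ ϑ(1/t₁ − 1/t₂) for all t₁ > t₂ > 0. Define M̂(t) = ∫₀ᵗ M(s) ds. Then M̂(t) ≥ (M(t) + ϑ)t/2 for all t ≥ 0. -/
theorem stmt_1 (M : ℝ → ℝ) (m₀ : ℝ) (hm₀ : 0 < m₀)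
    (hMcont : ContinuousOn M (Set.Ici 0))
    (hMpos : ∀ t ≥ 0, m₀ ≤ M t)
    (ϑ : ℝ) (hϑ : m₀ ≤ ϑ)
    (hM3 : ∀ t₁ t₂ : ℝ, t₂ > 0 → t₁ > t₂ →
      M t₁ / t₁ - M t₂ / t₂ ≤ ϑ * (1 / t₁ - 1 / t₂)) :
    ∀ t ≥ 0, (M t + ϑ) * t / 2 ≤ ∫ s in (0:ℝ)..t, M s := by
  intro t ht
  rcases eq_or_lt_of_le ht with h0 | ht
  · simp [← h0]
  have htne : t ≠ 0 := ne_of_gt ht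
  have hMint : IntervalIntegrable M MeasureTheory.volume 0 t := by
    apply ContinuousOn.intervalIntegrable
    apply hMcont.mono
    rw [Set.uIcc_of_le ht.le]
    exact fun x hx => hx.1
  set g : ℝ → ℝ := fun s => ϑ + (M t - ϑ) * s / t with hg
  have hgcont : Continuous g := by
    simp only [hg]; continuity
  have hgint : IntervalIntegrable g MeasureTheory.volume 0 t :=
    hgcont.intervalIntegrable 0 t
  have key : ∀ s ∈ Set.Ioc 0 t, g s ≤ M s := by
    intro s hs
    rcases eq_or_lt_of_le hs.2 with rfl | hst
    · simp only [hg]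
      field_simp
      linarith
    · have h3 := hM3 t s hs.1 hst
      have hs0 : (0:ℝ) < s := hs.1
      simp only [hg]
      have hst0 : (0:ℝ) < s * t := mul_pos hs0 ht
      have h4 := mul_le_mul_of_nonneg_left h3 hst0.le
      have e1 : s * t * (M t / t - M s / s) = s * M t - t * M s := by
        field_simp
      have e2 : s * t * (ϑ * (1 / t - 1 / s)) = s * ϑ - t * ϑ := by
        field_simp
      rw [e1, e2] at h4
      rw [show ϑ + (M t - ϑ) * s / t = (ϑ * t + (M t - ϑ) * s) / t by
        field_simp, div_le_iff₀ ht]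
      nlinarith
  have h0ae : ∀ᵐ s : ℝ, s ≠ (0:ℝ) := by
    rw [MeasureTheory.ae_iff]
    simpa using MeasureTheory.measure_singleton (0:ℝ)
  have hae : g ≤ᵐ[MeasureTheory.volume.restrict (Set.Icc 0 t)] M := by
    filter_upwards [MeasureTheory.ae_restrict_mem measurableSet_Icc,
      MeasureTheory.ae_restrict_of_ae h0ae] with s hs hs0
    exact key s ⟨lt_of_le_of_ne hs.1 (Ne.symm hs0), hs.2⟩
  have hmono := intervalIntegral.integral_mono_ae_restrict ht.le hgint hMint hae
  have hcalc : ∫ s in (0:ℝ)..t, g s = (M t + ϑ) * t / 2 := by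
    have heq : ∀ s : ℝ, g s = ϑ + ((M t - ϑ)/t) * s := by
      intro s; simp only [hg]; ring
    simp only [heq]
    rw [intervalIntegral.integral_add (intervalIntegrable_const)
      ((show Continuous (fun s : ℝ => (M t - ϑ)/t * s) from continuous_const.mul continuous_id').intervalIntegrable 0 t)]
    rw [intervalIntegral.integral_const, intervalIntegral.integral_const_mul,
      integral_id]
    field_simp
    ring
  linarith [hmono, hcalc.ge, hcalc.le]
end

section
/- Let M : [0,∞) → [0,∞) be continuous and suppose there exists ϑ > 0 such that M(t₁)/t₁ − M(t₂)/t₂ ≤ ϑ(1/t₁ − 1/t₂) for all t₁ > t₂ > 0. Define M̂(t) = ∫₀ᵗ M(s) ds. Then the function t ↦ (1/2) M̂(t) − (1/4) M(t) t is non-decreasing on [0,∞). -/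
theorem stmt_2 (M : ℝ → ℝ)
    (hMcont : ContinuousOn M (Set.Ici 0))
    (hMnonneg : ∀ t ≥ 0, 0 ≤ M t)
    (ϑ : ℝ) (hϑ : 0 < ϑ)
    (hM3 : ∀ t₁ t₂ : ℝ, t₂ > 0 → t₁ > t₂ →
      M t₁ / t₁ - M t₂ / t₂ ≤ ϑ * (1 / t₁ - 1 / t₂)) :
    MonotoneOn (fun t => (1/2) * (∫ s in (0:ℝ)..t, M s) - (1/4) * M t * t)
      (Set.Ici (0:ℝ)) := by
  intro a ha b hb hab
  rcases eq_or_lt_of_le hab with rfl | hlt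
  · exact le_refl _
  simp only [Set.mem_Ici] at ha hb
  have hbpos : 0 < b := lt_of_le_of_lt ha hlt
  set c : ℝ := (M b - ϑ) / b with hc
  have hcb : c * b = M b - ϑ := by rw [hc, div_mul_cancel₀ _ (ne_of_gt hbpos)]
  -- lower bound M s ≥ c * s + ϑ for s ∈ (0, b]
  have key : ∀ s : ℝ, 0 < s → s ≤ b → c * s + ϑ ≤ M s := by
    intro s hs hsb
    rcases eq_or_lt_of_le hsb with rfl | hsb'
    · nlinarith
    · have h0 := hM3 b s hs hsb'
      rw [div_sub_div _ _ (ne_of_gt hbpos) (ne_of_gt hs)] at h0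
      have hbs : 0 < b * s := mul_pos hbpos hs
      rw [div_le_iff₀ hbs] at h0
      have h1 : ϑ * (1/b - 1/s) * (b*s) = ϑ * (s - b) := by field_simp
      rw [h1] at h0
      have h2 : (c * s + ϑ) * b ≤ M s * b := by nlinarith [h0, hcb]
      exact le_of_mul_le_mul_right h2 hbpos
  -- integrability
  have hIab : IntervalIntegrable M MeasureTheory.volume a b := by
    apply ContinuousOn.intervalIntegrable
    apply hMcont.mono
    rw [Set.uIcc_of_le hab]
    exact fun x hx => le_trans ha hx.1
  have hI0a : IntervalIntegrable M MeasureTheory.volume 0 a := by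
    apply ContinuousOn.intervalIntegrable
    apply hMcont.mono
    rw [Set.uIcc_of_le ha]
    exact fun x hx => hx.1
  have hsplit : (∫ s in (0:ℝ)..b, M s) = (∫ s in (0:ℝ)..a, M s) + ∫ s in a..b, M s :=
    (intervalIntegral.integral_add_adjacent_intervals hI0a hIab).symm
  -- integral lower bound
  have hlin : IntervalIntegrable (fun s => c * s + ϑ) MeasureTheory.volume a b :=
    ((continuous_const.mul continuous_id).add continuous_const).intervalIntegrable a b
  have hmono : (∫ s in a..b, (c * s + ϑ)) ≤ ∫ s in a..b, M s := by
    rw [intervalIntegral.integral_of_le hab, intervalIntegral.integral_of_le hab]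
    apply MeasureTheory.setIntegral_mono_on
    · exact hlin.1
    · exact hIab.1
    · exact measurableSet_Ioc
    · intro s hs
      exact key s (lt_of_le_of_lt ha hs.1) hs.2
  have hcomp : (∫ s in a..b, (c * s + ϑ)) = c * (b^2 - a^2) / 2 + ϑ * (b - a) := by
    rw [intervalIntegral.integral_add (f := fun s => c * s) (g := fun _ => ϑ) ((continuous_const.mul continuous_id').intervalIntegrable a b)
        intervalIntegrable_const,
      intervalIntegral.integral_const_mul, integral_id, intervalIntegral.integral_const,
      smul_eq_mul]
    ring
  -- bound at a
  have hMa : c * a ^ 2 + ϑ * a ≤ M a * a := by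
    rcases eq_or_lt_of_le ha with rfl | hapos
    · simp
    · have := key a hapos hab
      nlinarith
  have hcb2 : c * b ^ 2 = M b * b - ϑ * b := by
    have : c * b ^ 2 = (c * b) * b := by ring
    rw [this, hcb]; ring
  have hineq : c * (b^2 - a^2) / 2 + ϑ * (b - a) ≤ ∫ s in a..b, M s := hcomp ▸ hmono
  simp only
  rw [hsplit]
  nlinarith [hineq, hMa, hcb2, mul_pos hϑ (sub_pos.mpr hlt), mul_nonneg hϑ.le ha]
end
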